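/- Let p̃_{t+1} = ((n_e − n*)·(1−s)^t + n*) / (n·(1−s)^t − ((1−s)/s)·(1 − (1−s)^t)), for s ∈ (0,1), n > 0, 0 < n* ≤ n_e ≤ n. Viewed as a function of real t ≥ 0, p̃_{t+1} is strictly increasing and convex on the interval [0, t⁽²⁾) where t⁽²⁾ = log(n·s/(1−s) + 1)/log(1/(1−s)) is the time at which the denominator vanishes. -/

import Mathlib

open Real Set



set_option maxHeartbeats 1000000

private lemma sss_aux1 (s q n ne k L : ℝ) (hs : s ≠ 0)
    (hd : n * x - q / s * (1 - x) ≠ 0) :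
    ((ne - k) * (q / s) + (n + q / s) * k) * (-L) * x / (n * x - q / s * (1 - x)) ^ 2
      = ((ne - k) * (x * L) * (n * x - q / s * (1 - x)) -
          ((ne - k) * x + k) * ((n + q / s) * (x * L))) / (n * x - q / s * (1 - x)) ^ 2 := by
  field_simp
  ring

private lemma sss_aux2 (s q n C1 L : ℝ) (hs : s ≠ 0)
    (hd : n * x - q / s * (1 - x) ≠ 0) :
    C1 * (-L) * x * ((n + q / s) * x + q / s) / (n * x - q / s * (1 - x)) ^ 3
      = (C1 * (x * L) * (n * x - q / s * (1 - x)) ^ 2 -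
          C1 * x * (2 * (n * x - q / s * (1 - x)) ^ 1 * ((n + q / s) * (x * L)))) /
        ((n * x - q / s * (1 - x)) ^ 2) ^ 2 := by
  have h3 : (n * x - q / s * (1 - x)) ^ 3 ≠ 0 := pow_ne_zero 3 hd
  have h4 : ((n * x - q / s * (1 - x)) ^ 2) ^ 2 ≠ 0 := pow_ne_zero 2 (pow_ne_zero 2 hd)
  rw [div_eq_div_iff h3 h4]
  ring

/-- The approximate conditional SSS hitting probability
`p̃(t) = ((ne - k)(1-s)^t + k) / (n(1-s)^t - ((1-s)/s)(1-(1-s)^t))`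
(real powers), viewed as a function of real `t ≥ 0`, is strictly increasing
and convex on `[0, t⁽²⁾)`, where
`t⁽²⁾ = log(ns/(1-s) + 1)/log(1/(1-s))` is where the denominator vanishes. -/
theorem sss_conditional_prob_convex_increasing (s n k ne : ℝ)
    (hs : s ∈ Set.Ioo (0:ℝ) 1) (hn : 0 < n) (hk : 0 < k) (hkne : k ≤ ne) (hne : ne ≤ n) :
    StrictMonoOn
      (fun t : ℝ => ((ne - k) * (1 - s) ^ t + k) /
        (n * (1 - s) ^ t - ((1 - s) / s) * (1 - (1 - s) ^ t)))
      (Set.Ico (0:ℝ) (Real.log (n * s / (1 - s) + 1) / Real.log (1 / (1 - s))))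
    ∧ ConvexOn ℝ
      (Set.Ico (0:ℝ) (Real.log (n * s / (1 - s) + 1) / Real.log (1 / (1 - s))))
      (fun t : ℝ => ((ne - k) * (1 - s) ^ t + k) /
        (n * (1 - s) ^ t - ((1 - s) / s) * (1 - (1 - s) ^ t))) := by
  obtain ⟨hs0, hs1⟩ := hs
  have hq0 : (0:ℝ) < 1 - s := by linarith
  have hq1 : (1:ℝ) - s < 1 := by linarith
  set q : ℝ := 1 - s with hqdef
  have hlq : Real.log q < 0 := Real.log_neg hq0 hq1
  set T : ℝ := Real.log (n * s / q + 1) / Real.log (1 / q) with hT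
  set F : ℝ → ℝ := fun t : ℝ => ((ne - k) * q ^ t + k) /
      (n * q ^ t - q / s * (1 - q ^ t)) with hF
  have hqt : ∀ t : ℝ, (0:ℝ) < q ^ t := fun t => Real.rpow_pos_of_pos hq0 t
  have hnsq : (0:ℝ) < n * s / q + 1 := by positivity
  have hqT : q ^ T = (n * s / q + 1)⁻¹ := by
    rw [Real.rpow_def_of_pos hq0, hT, one_div, Real.log_inv]
    have hlq' : Real.log q ≠ 0 := ne_of_lt hlq
    have h : Real.log q * (Real.log (n * s / q + 1) / -Real.log q)
        = -Real.log (n * s / q + 1) := by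
      field_simp
    rw [h, Real.exp_neg, Real.exp_log hnsq]
  -- positivity of the denominator on Iio T
  have hDpos : ∀ t : ℝ, t < T → 0 < n * q ^ t - q / s * (1 - q ^ t) := by
    intro t ht
    have h1 : q ^ T < q ^ t := Real.rpow_lt_rpow_of_exponent_gt hq0 hq1 ht
    rw [hqT] at h1
    have h2 : (n * s / q + 1)⁻¹ = q / (n * s + q) := by
      rw [inv_eq_one_div]
      field_simp
    rw [h2] at h1
    have h3 : q / (n * s + q) * (n * s + q) < q ^ t * (n * s + q) := by
      have : (0:ℝ) < n * s + q := by positivity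
      exact mul_lt_mul_of_pos_right h1 this
    rw [div_mul_cancel₀ _ (by positivity : n * s + q ≠ 0)] at h3
    have h4 : 0 < (n * s + q) * q ^ t - q := by linarith
    have h5 : n * q ^ t - q / s * (1 - q ^ t) = ((n * s + q) * q ^ t - q) / s := by
      field_simp; ring
    rw [h5]; positivity
  have hDne : ∀ t : ℝ, t < T → n * q ^ t - q / s * (1 - q ^ t) ≠ 0 :=
    fun t ht => ne_of_gt (hDpos t ht)
  -- derivative building blocks
  have hqd : ∀ t : ℝ, HasDerivAt (fun t : ℝ => q ^ t) (q ^ t * Real.log q) t :=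
    fun t => (Real.hasStrictDerivAt_const_rpow hq0 t).hasDerivAt
  have hNd : ∀ t : ℝ, HasDerivAt (fun t : ℝ => (ne - k) * q ^ t + k)
      ((ne - k) * (q ^ t * Real.log q)) t :=
    fun t => (((hqd t).const_mul (ne - k)).add_const k)
  have hDd : ∀ t : ℝ, HasDerivAt (fun t : ℝ => n * q ^ t - q / s * (1 - q ^ t))
      ((n + q / s) * (q ^ t * Real.log q)) t := by
    intro t
    have h : HasDerivAt (fun t : ℝ => n * q ^ t - q / s * (1 - q ^ t))
        (n * (q ^ t * Real.log q) - q / s * (0 - q ^ t * Real.log q)) t :=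
      ((hqd t).const_mul n).sub ((((hasDerivAt_const t (1:ℝ))).sub (hqd t)).const_mul (q / s))
    convert h using 1; ring
  -- first derivative
  set C1 : ℝ := ((ne - k) * (q / s) + (n + q / s) * k) * (-Real.log q) with hC1
  have hC1pos : 0 < C1 := by
    have h1 : 0 ≤ (ne - k) * (q / s) :=
      mul_nonneg (by linarith) (le_of_lt (by positivity))
    have h2 : 0 < (n + q / s) * k := by positivity
    exact mul_pos (by linarith) (by linarith)
  set F1 : ℝ → ℝ := fun t : ℝ => C1 * q ^ t / (n * q ^ t - q / s * (1 - q ^ t)) ^ 2 with hF1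
  have hfd : ∀ t : ℝ, t < T → HasDerivAt F (F1 t) t := by
    intro t ht
    have h := (hNd t).div (hDd t) (hDne t ht)
    refine h.congr_deriv ?_
    exact (sss_aux1 s q n ne k (Real.log q) (ne_of_gt hs0) (hDne t ht)).symm
  have hF1pos : ∀ t : ℝ, t < T → 0 < F1 t := by
    intro t ht
    have := hDpos t ht
    have := hqt t
    rw [hF1]
    positivity
  -- second derivative
  set F2 : ℝ → ℝ := fun t : ℝ =>
      C1 * (-Real.log q) * q ^ t * ((n + q / s) * q ^ t + q / s) /
        (n * q ^ t - q / s * (1 - q ^ t)) ^ 3 with hF2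
  have hf1d : ∀ t : ℝ, t < T → HasDerivAt F1 (F2 t) t := by
    intro t ht
    have hd := hDne t ht
    have hnum : HasDerivAt (fun t : ℝ => C1 * q ^ t) (C1 * (q ^ t * Real.log q)) t :=
      (hqd t).const_mul C1
    have hden : HasDerivAt (fun t : ℝ => (n * q ^ t - q / s * (1 - q ^ t)) ^ 2)
        (2 * (n * q ^ t - q / s * (1 - q ^ t)) ^ 1 * ((n + q / s) * (q ^ t * Real.log q))) t :=
      (hDd t).pow 2
    have h := hnum.div hden (pow_ne_zero 2 hd)
    refine h.congr_deriv ?_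
    exact (sss_aux2 s q n C1 (Real.log q) (ne_of_gt hs0) hd).symm
  have hF2pos : ∀ t : ℝ, t < T → 0 < F2 t := by
    intro t ht
    have h1 := hDpos t ht
    have h2 := hqt t
    have h3 : 0 < -Real.log q := by linarith
    rw [hF2]
    have h4 : 0 < (n + q / s) * q ^ t + q / s := by positivity
    positivity
  have hcont : ContinuousOn F (Set.Ico (0:ℝ) T) := by
    intro x hx
    exact ((hfd x hx.2).differentiableAt.continuousAt).continuousWithinAt
  have hint : interior (Set.Ico (0:ℝ) T) = Set.Ioo (0:ℝ) T := interior_Ico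
  constructor
  · apply strictMonoOn_of_deriv_pos (convex_Ico _ _) hcont
    intro x hx
    rw [hint] at hx
    rw [(hfd x hx.2).deriv]
    exact hF1pos x hx.2
  · apply convexOn_of_deriv2_nonneg (convex_Ico _ _) hcont
    · intro x hx
      rw [hint] at hx
      exact (hfd x hx.2).differentiableAt.differentiableWithinAt
    · intro x hx
      rw [hint] at hx
      have hev : deriv F =ᶠ[nhds x] F1 :=
        Filter.eventuallyEq_of_mem (Iio_mem_nhds hx.2) (fun y hy => (hfd y hy).deriv)
      exact ((hf1d x hx.2).congr_of_eventuallyEq hev).differentiableAt.differentiableWithinAt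
    · intro x hx
      rw [hint] at hx
      have hev : deriv F =ᶠ[nhds x] F1 :=
        Filter.eventuallyEq_of_mem (Iio_mem_nhds hx.2) (fun y hy => (hfd y hy).deriv)
      have h2 : deriv (deriv F) x = F2 x :=
        ((hf1d x hx.2).congr_of_eventuallyEq hev).deriv
      show 0 ≤ deriv (deriv F) x
      rw [h2]
      exact le_of_lt (hF2pos x hx.2)
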